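/- Let U ⊆ ℝ² be open and bounded with 0 ∉ ∂U, and let F: Ψ⁻¹(∂U) → ℝ² be continuous, 2π-periodic in the first variable, with F(θ,r) ≠ v for all (θ,r) ∈ Ψ⁻¹(∂U). Then the degree 𝔇(F, U, v) := deg(F_ext ∘ Ψ⁻¹, U, v) is well defined, i.e., independent of the choice of the continuous extension F_ext: ℝ × [0,∞) → ℝ² that is 2π-periodic in the first variable, agrees with F on Ψ⁻¹(∂U), and is constant on ℝ × {0}. -/

import Mathlib

noncomputable section

open Set Metric Bornology

/-- Clockwise polar coordinates `Ψ(θ, r) = (r cos θ, -r sin θ)`. -/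
def PsiP (p : ℝ × ℝ) : ℝ × ℝ := (p.2 * Real.cos p.1, -(p.2 * Real.sin p.1))

/-- The set `Ψ⁻¹(E)` in the open half-plane (points with positive radius mapping into `E`). -/
def preE (E : Set (ℝ × ℝ)) : Set (ℝ × ℝ) := {p : ℝ × ℝ | 0 < p.2 ∧ PsiP p ∈ E}

/-- `F` is `2π`-periodic in the first variable, on `Ψ⁻¹(E)`. -/
def PerOn (F : ℝ × ℝ → ℝ × ℝ) (E : Set (ℝ × ℝ)) : Prop :=
  ∀ p : ℝ × ℝ, p ∈ preE E → F (p.1 + 2 * Real.pi, p.2) = F p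

/-- The rotation set `rot(F, E) = {F^θ(y)/(2π) : y ∈ Ψ⁻¹(E)}`. -/
def rotSet (F : ℝ × ℝ → ℝ × ℝ) (E : Set (ℝ × ℝ)) : Set ℝ :=
  {t : ℝ | ∃ p ∈ preE E, t = (F p).1 / (2 * Real.pi)}

/-- `Σ(F, E) = ℤ ∩ conv (rot(F, E))`. -/
def SigmaSet (F : ℝ × ℝ → ℝ × ℝ) (E : Set (ℝ × ℝ)) : Set ℤ :=
  {n : ℤ | (n : ℝ) ∈ convexHull ℝ (rotSet F E)}

/-- `ν_i = (2πi, 0)`. -/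
def nu (i : ℤ) : ℝ × ℝ := (2 * Real.pi * i, 0)

/-- A Brouwer degree theory on the plane, characterized by the classical axioms:
normalization, dependence only on boundary values, homotopy invariance, additivity,
and the solution property. -/
structure DegTheory where
  deg : (ℝ × ℝ → ℝ × ℝ) → Set (ℝ × ℝ) → ℝ × ℝ → ℤ
  deg_id : ∀ (U : Set (ℝ × ℝ)) (v : ℝ × ℝ), IsOpen U → IsBounded U → v ∈ U →
    deg id U v = 1
  deg_congr : ∀ (g₁ g₂ : ℝ × ℝ → ℝ × ℝ) (U : Set (ℝ × ℝ)) (v : ℝ × ℝ),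
    IsOpen U → IsBounded U → ContinuousOn g₁ (closure U) → ContinuousOn g₂ (closure U) →
    (∀ x ∈ frontier U, g₁ x = g₂ x) → (∀ x ∈ frontier U, g₁ x ≠ v) →
    deg g₁ U v = deg g₂ U v
  deg_homotopy : ∀ (H : (ℝ × ℝ) × ℝ → ℝ × ℝ) (U : Set (ℝ × ℝ)) (v : ℝ × ℝ),
    IsOpen U → IsBounded U →
    ContinuousOn H ((closure U) ×ˢ Icc (0:ℝ) 1) →
    (∀ x ∈ frontier U, ∀ t ∈ Icc (0:ℝ) 1, H (x, t) ≠ v) →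
    deg (fun x => H (x, 0)) U v = deg (fun x => H (x, 1)) U v
  deg_additive : ∀ (g : ℝ × ℝ → ℝ × ℝ) (U U₁ U₂ : Set (ℝ × ℝ)) (v : ℝ × ℝ),
    IsOpen U → IsOpen U₁ → IsOpen U₂ → IsBounded U →
    U₁ ⊆ U → U₂ ⊆ U → Disjoint U₁ U₂ → ContinuousOn g (closure U) →
    (∀ x ∈ closure U \ (U₁ ∪ U₂), g x ≠ v) →
    deg g U v = deg g U₁ v + deg g U₂ v
  deg_exists : ∀ (g : ℝ × ℝ → ℝ × ℝ) (U : Set (ℝ × ℝ)) (v : ℝ × ℝ),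
    IsOpen U → IsBounded U → ContinuousOn g (closure U) →
    deg g U v ≠ 0 → ∃ x ∈ U, g x = v

/-- `g : ℝ² → ℝ²` represents `F_ext ∘ Ψ⁻¹` for an admissible extension `F_ext` of `F`
(`F` being defined on `Ψ⁻¹(∂U)`): `g` is continuous on the plane and agrees with
`F ∘ Ψ⁻¹` on `∂U`.  (Via `F_ext = g ∘ Ψ`, this is equivalent to the existence of a
continuous extension `F_ext` of `F` to the closed half-plane which is `2π`-periodic in
the first variable and constant on the line `r = 0`.) -/
def IsDExt (F : ℝ × ℝ → ℝ × ℝ) (U : Set (ℝ × ℝ)) (g : ℝ × ℝ → ℝ × ℝ) : Prop :=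
  Continuous g ∧ ∀ p : ℝ × ℝ, p ∈ preE (frontier U) → g (PsiP p) = F p

/-- Euclidean open ball of radius `ρ` about the origin of the plane. -/
def ball2 (ρ : ℝ) : Set (ℝ × ℝ) := {x : ℝ × ℝ | x.1 ^ 2 + x.2 ^ 2 < ρ ^ 2}

/-- Euclidean circle of radius `ρ` about the origin of the plane. -/
def sphere2 (ρ : ℝ) : Set (ℝ × ℝ) := {x : ℝ × ℝ | x.1 ^ 2 + x.2 ^ 2 = ρ ^ 2}

/-- Euclidean norm on the plane. -/
def sqnorm (x : ℝ × ℝ) : ℝ := Real.sqrt (x.1 ^ 2 + x.2 ^ 2)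

/-- `Φ` is the (unique) lift, through the clockwise polar coordinates `Ψ`, of the
evolution map `φ` on `[0,T] × Ψ⁻¹(S)`: it is continuous, starts from the identity,
projects to `φ` via `Ψ`, stays in the open half-plane, and is equivariant under the
deck transformation `θ ↦ θ + 2π`. -/
def IsLiftOn (φ : ℝ → ℝ × ℝ → ℝ × ℝ) (Φ : ℝ → ℝ × ℝ → ℝ × ℝ) (T : ℝ)
    (S : Set (ℝ × ℝ)) : Prop :=
  ContinuousOn (fun q : ℝ × (ℝ × ℝ) => Φ q.1 q.2) (Icc 0 T ×ˢ preE S) ∧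
  (∀ p ∈ preE S, Φ 0 p = p) ∧
  (∀ t ∈ Icc 0 T, ∀ p ∈ preE S,
    PsiP (Φ t p) = φ t (PsiP p) ∧ 0 < (Φ t p).2 ∧
    Φ t (p.1 + 2 * Real.pi, p.2) = ((Φ t p).1 + 2 * Real.pi, (Φ t p).2))


lemma exists_pre (x : ℝ × ℝ) (hx : x ≠ 0) : ∃ p : ℝ × ℝ, 0 < p.2 ∧ PsiP p = x := by
  set z : ℂ := ⟨x.1, x.2⟩ with hz
  have hz0 : z ≠ 0 := by
    intro h
    apply hx
    have h1 : z.re = 0 := by rw [h]; simp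
    have h2 : z.im = 0 := by rw [h]; simp
    exact Prod.ext h1 h2
  have habs : 0 < ‖z‖ := norm_pos_iff.mpr hz0
  refine ⟨(-z.arg, ‖z‖), habs, ?_⟩
  have hc := Complex.cos_arg hz0
  have hs := Complex.sin_arg z
  have : PsiP (-z.arg, ‖z‖)
      = (‖z‖ * Real.cos z.arg, ‖z‖ * Real.sin z.arg) := by
    simp [PsiP, Real.cos_neg, Real.sin_neg]
  rw [this, hc, hs]
  have hne : ‖z‖ ≠ 0 := ne_of_gt habs
  ext <;> simp <;> field_simp <;> rfl

/-- the degree `𝔇(F,U,v) = deg(F_ext ∘ Ψ⁻¹, U, v)` is well defined: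
any two admissible extensions of `F` yield the same Brouwer degree. -/
theorem statement5 (D : DegTheory) (U : Set (ℝ × ℝ)) (F : ℝ × ℝ → ℝ × ℝ) (v : ℝ × ℝ)
    (hU : IsOpen U) (hUb : IsBounded U) (h0 : (0 : ℝ × ℝ) ∉ frontier U)
    (hFc : ContinuousOn F (preE (frontier U))) (hFper : PerOn F (frontier U))
    (hFv : ∀ p ∈ preE (frontier U), F p ≠ v)
    (g₁ g₂ : ℝ × ℝ → ℝ × ℝ)
    (h₁ : IsDExt F U g₁) (h₂ : IsDExt F U g₂) :
    D.deg g₁ U v = D.deg g₂ U v := by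
  obtain ⟨hg₁c, hg₁⟩ := h₁
  obtain ⟨hg₂c, hg₂⟩ := h₂
  have key : ∀ x ∈ frontier U, ∃ p ∈ preE (frontier U), PsiP p = x := by
    intro x hx
    have hx0 : x ≠ 0 := fun h => h0 (h ▸ hx)
    obtain ⟨p, hp2, hpx⟩ := exists_pre x hx0
    exact ⟨p, ⟨hp2, hpx ▸ hx⟩, hpx⟩
  apply D.deg_congr g₁ g₂ U v hU hUb hg₁c.continuousOn hg₂c.continuousOn
  · intro x hx
    obtain ⟨p, hp, hpx⟩ := key x hx
    rw [← hpx, hg₁ p hp, hg₂ p hp]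
  · intro x hx
    obtain ⟨p, hp, hpx⟩ := key x hx
    rw [← hpx, hg₁ p hp]
    exact hFv p hp
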